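/- Let p be a strictly positive probability distribution on {1,2}×{1,2}, with marginals p₁(k) = Σ_l p(k,l) and p₂(l) = Σ_k p(k,l). Define the 2×2 row-stochastic matrices B_{kl} = p(k,l)/p₁(k) and B'_{lk} = p(k,l)/p₂(l), and the combined kernel K = B·B'. Then the eigenvalues of K are 1 and det(K), and det(K) = ρ², where ρ is the Pearson correlation coefficient, under p, of the two coordinate random variables (viewed as real-valued); in particular the second eigenvalue of K equals the square of the Pearson correlation between the two variables. -/

import Mathlib

open Finset Polynomial

lemma charpoly_two (K : Matrix (Fin 2) (Fin 2) ℝ) :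
    K.charpoly = X^2 - C (K 0 0 + K 1 1) * X + C (K 0 0 * K 1 1 - K 0 1 * K 1 0) := by
  rw [Matrix.charpoly, Matrix.det_fin_two]
  simp [Matrix.charmatrix_apply, Matrix.one_apply]
  ring

/-- For a strictly positive probability distribution `p` on `{1,2}×{1,2}`, with
`B_{kl} = p(k,l)/p₁(k)`, `B'_{lk} = p(k,l)/p₂(l)` and `K = B·B'`, the eigenvalues of `K`
are `1` and `det K` (its characteristic polynomial is `(X−1)(X−det K)`), and
`det K = ρ²` where `ρ` is the Pearson correlation coefficient of the two coordinates. -/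
theorem two_by_two_second_eigenvalue_is_correlation_sq
    (p : Fin 2 → Fin 2 → ℝ) (hp : ∀ k l, 0 < p k l)
    (hsum : ∑ k, ∑ l, p k l = 1)
    (p₁ p₂ : Fin 2 → ℝ)
    (hp₁ : ∀ k, p₁ k = ∑ l, p k l) (hp₂ : ∀ l, p₂ l = ∑ k, p k l)
    (B B' K : Matrix (Fin 2) (Fin 2) ℝ)
    (hB : ∀ k l, B k l = p k l / p₁ k)
    (hB' : ∀ l k, B' l k = p k l / p₂ l)
    (hK : K = B * B')
    -- the coordinates viewed as real-valued random variables (values 1 and 2)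
    (X Y : Fin 2 → Fin 2 → ℝ)
    (hX : ∀ k l, X k l = (k : ℕ) + 1) (hY : ∀ k l, Y k l = (l : ℕ) + 1)
    (EX EY EXY varX varY ρ : ℝ)
    (hEX : EX = ∑ k, ∑ l, X k l * p k l)
    (hEY : EY = ∑ k, ∑ l, Y k l * p k l)
    (hEXY : EXY = ∑ k, ∑ l, X k l * Y k l * p k l)
    (hvarX : varX = (∑ k, ∑ l, X k l ^ 2 * p k l) - EX ^ 2)
    (hvarY : varY = (∑ k, ∑ l, Y k l ^ 2 * p k l) - EY ^ 2)
    (hρ : ρ = (EXY - EX * EY) / (Real.sqrt varX * Real.sqrt varY)) :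
    K.charpoly = (Polynomial.X - 1) * (Polynomial.X - Polynomial.C K.det) ∧
      K.det = ρ ^ 2 := by
  have ha := hp 0 0; have hb := hp 0 1; have hc := hp 1 0; have hd := hp 1 1
  set a := p 0 0; set b := p 0 1; set c := p 1 0; set d := p 1 1
  have hsum' : a + b + c + d = 1 := by
    have h := hsum
    simp only [Fin.sum_univ_two] at h
    linarith
  have h10 : p₁ 0 = a + b := by rw [hp₁]; simp [Fin.sum_univ_two]; rfl
  have h11 : p₁ 1 = c + d := by rw [hp₁]; simp [Fin.sum_univ_two]; rfl
  have h20 : p₂ 0 = a + c := by rw [hp₂]; simp [Fin.sum_univ_two]; rfl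
  have h21 : p₂ 1 = b + d := by rw [hp₂]; simp [Fin.sum_univ_two]; rfl
  have n10 : p₁ 0 ≠ 0 := by rw [h10]; positivity
  have n11 : p₁ 1 ≠ 0 := by rw [h11]; positivity
  have n20 : p₂ 0 ≠ 0 := by rw [h20]; positivity
  have n21 : p₂ 1 ≠ 0 := by rw [h21]; positivity
  -- determinant
  have hdet : K.det = (a*d - b*c)^2 / ((a+b)*(c+d)*((a+c)*(b+d))) := by
    rw [hK, Matrix.det_mul, Matrix.det_fin_two, Matrix.det_fin_two,
      hB 0 0, hB 0 1, hB 1 0, hB 1 1, hB' 0 0, hB' 0 1, hB' 1 0, hB' 1 1,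
      h10, h11, h20, h21]
    field_simp
    ring
  -- K entries
  have hK00 : K 0 0 = (a/(a+b))*(a/(a+c)) + (b/(a+b))*(b/(b+d)) := by
    rw [hK]
    simp only [Matrix.mul_apply, Fin.sum_univ_two, hB, hB', h10, h20, h21]; rfl
  have hK11 : K 1 1 = (c/(c+d))*(c/(a+c)) + (d/(c+d))*(d/(b+d)) := by
    rw [hK]
    simp only [Matrix.mul_apply, Fin.sum_univ_two, hB, hB', h11, h20, h21]; rfl
  have htr : K 0 0 + K 1 1 = 1 + K.det := by
    rw [hK00, hK11, hdet]
    have hab : a + b ≠ 0 := by positivity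
    have hcd : c + d ≠ 0 := by positivity
    have hac : a + c ≠ 0 := by positivity
    have hbd : b + d ≠ 0 := by positivity
    field_simp
    ring
  -- moments
  have hEX' : EX = a + b + 2*c + 2*d := by
    rw [hEX]; simp [hX, Fin.sum_univ_two]; ring
  have hEY' : EY = a + 2*b + c + 2*d := by
    rw [hEY]; simp [hY, Fin.sum_univ_two]; ring
  have hvX : varX = (a+b)*(c+d) := by
    rw [hvarX, hEX']; simp [hX, Fin.sum_univ_two]
    linear_combination (-(a+b) - 4*(c+d)) * hsum'
  have hvY : varY = (a+c)*(b+d) := by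
    rw [hvarY, hEY']; simp [hY, Fin.sum_univ_two]
    linear_combination (-(a+c) - 4*(b+d)) * hsum'
  have hcov : EXY - EX * EY = a*d - b*c := by
    rw [hEXY, hEX', hEY']; simp [hX, hY, Fin.sum_univ_two]
    linear_combination (-(a + 2*b + 2*c + 4*d)) * hsum'
  have hvXpos : (0:ℝ) < varX := by rw [hvX]; positivity
  have hvYpos : (0:ℝ) < varY := by rw [hvY]; positivity
  constructor
  · rw [charpoly_two, ← Matrix.det_fin_two, htr]
    rw [map_add, map_one]
    ring
  · rw [hρ, div_pow, mul_pow, Real.sq_sqrt hvXpos.le, Real.sq_sqrt hvYpos.le,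
      hcov, hvX, hvY, hdet]
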